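/- If the set function f : 2^V → ℝ≥0 is monotone and α-weakly DR-submodular for some α ∈ (0,1], then for every feasible subset S ⊆ V and every point x = (p_1,…,p_K) ∈ ∏_{k=1}^K Δ_{n_k}, one has α·(f(S) − F(x)) ≤ ⟨ Σ_{k=1}^K (1/B_k)·1_{S∩V_k}, ∇F(x) ⟩. -/

import Mathlib

open Finset

noncomputable section

namespace Multinoulli

variable {K : ℕ}

/-- An element of the ground set `V`: a community index `k` together with the
index `m` of the element `v_k^m` inside its community `V_k`. -/
abbrev Elem (n : Fin K → ℕ) := Σ k : Fin K, Fin (n k)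

/-- A sampling slot: a community `k` together with a trial index `b ∈ {1,…,B_k}`. -/
abbrev Slot (B : Fin K → ℕ) := Σ k : Fin K, Fin (B k)

/-- A joint outcome of all the independent multinoulli trials; `none` encodes a
draw of `∅`, which contributes no element. -/
abbrev Choice (n B : Fin K → ℕ) := ∀ s : Slot B, Option (Fin (n s.1))

/-- The probability that `Multi(p_k)` (the `k`-th block of `x`) assigns to a given
outcome: `x ⟨k,m⟩` for the element `v_k^m` and `1 - Σ_m x ⟨k,m⟩` for `∅`. -/
def prob (n : Fin K → ℕ) (x : Elem n → ℝ) (k : Fin K) : Option (Fin (n k)) → ℝ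
  | some m => x ⟨k, m⟩
  | none => 1 - ∑ m : Fin (n k), x ⟨k, m⟩

/-- The probability of the joint outcome `e` (all trials are mutually independent). -/
def jointProb (n B : Fin K → ℕ) (x : Elem n → ℝ) (e : Choice n B) : ℝ :=
  ∏ s : Slot B, prob n x s.1 (e s)

/-- The subset of the ground set selected by the trials whose slot lies in `A`
(a draw of `∅` contributes no element to the union). -/
def chosen (n B : Fin K → ℕ) (e : Choice n B) (A : Finset (Slot B)) : Finset (Elem n) :=
  A.biUnion fun s => ((e s).map fun m => (⟨s.1, m⟩ : Elem n)).toFinset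

/-- The Multinoulli Extension `F` of the set function `f`:
`F(x) = E[f(∪_{k,b} {e_k^b})]` for mutually independent `e_k^b ∼ Multi(p_k)`. -/
def ME (n B : Fin K → ℕ) (f : Finset (Elem n) → ℝ) (x : Elem n → ℝ) : ℝ :=
  ∑ e : Choice n B, f (chosen n B e Finset.univ) * jointProb n B x e

/-- The first-order partial derivative `∂G/∂x_i` at `x`. -/
def pderiv (n : Fin K → ℕ) (G : (Elem n → ℝ) → ℝ) (i : Elem n) (x : Elem n → ℝ) : ℝ :=
  deriv (fun t => G (Function.update x i t)) (x i)

/-- The gradient `∇G(x)`. -/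
def grad (n : Fin K → ℕ) (G : (Elem n → ℝ) → ℝ) (x : Elem n → ℝ) : Elem n → ℝ :=
  fun i => pderiv n G i x

/-- The second-order partial derivative `∂²G/∂x_i∂x_j` at `x`. -/
def pderiv2 (n : Fin K → ℕ) (G : (Elem n → ℝ) → ℝ) (i j : Elem n) (x : Elem n → ℝ) : ℝ :=
  pderiv n (fun y => pderiv n G j y) i x

/-- The Euclidean inner product on `∏_k ℝ^{n_k}`. -/
def inner' (n : Fin K → ℕ) (u v : Elem n → ℝ) : ℝ := ∑ i : Elem n, u i * v i

/-- Membership in the product of simplices `∏_{k=1}^K Δ_{n_k}`. -/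
def InSimplex (n : Fin K → ℕ) (x : Elem n → ℝ) : Prop :=
  (∀ i, 0 ≤ x i) ∧ ∀ k : Fin K, ∑ m : Fin (n k), x ⟨k, m⟩ ≤ 1

/-- Feasibility for the partition constraint: `|S ∩ V_k| ≤ B_k` for all `k`. -/
def Feasible (n B : Fin K → ℕ) (S : Finset (Elem n)) : Prop :=
  ∀ k : Fin K, (S.filter fun i => i.1 = k).card ≤ B k

/-- Monotonicity of a set function. -/
def MonotoneSet (n : Fin K → ℕ) (f : Finset (Elem n) → ℝ) : Prop :=
  ∀ A B : Finset (Elem n), A ⊆ B → f A ≤ f B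

/-- The marginal contribution `f(v|A) = f(A ∪ {v}) - f(A)`. -/
def marg (n : Fin K → ℕ) (f : Finset (Elem n) → ℝ) (v : Elem n) (A : Finset (Elem n)) : ℝ :=
  f (insert v A) - f A

/-- `α`-weak DR-submodularity: `f(v|A) ≥ α·f(v|B)` for all `A ⊆ B` and `v ∉ B`. -/
def WeaklyDR (n : Fin K → ℕ) (f : Finset (Elem n) → ℝ) (α : ℝ) : Prop :=
  ∀ A B : Finset (Elem n), A ⊆ B → ∀ v, v ∉ B → α * marg n f v B ≤ marg n f v A

/-- `γ`-weak submodularity from below. -/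
def WeaklyBelow (n : Fin K → ℕ) (f : Finset (Elem n) → ℝ) (γ : ℝ) : Prop :=
  ∀ A B : Finset (Elem n), A ⊆ B → γ * (f B - f A) ≤ ∑ v ∈ B \ A, marg n f v A

/-- `β`-weak submodularity from above. -/
def WeaklyAbove (n : Fin K → ℕ) (f : Finset (Elem n) → ℝ) (β : ℝ) : Prop :=
  ∀ A B : Finset (Elem n), A ⊆ B → ∑ v ∈ B \ A, marg n f v (B.erase v) ≤ β * (f B - f A)

/-- The scaled indicator vector `Σ_{k=1}^K (1/B_k)·1_{S∩V_k}`. -/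
def indVec (n B : Fin K → ℕ) (S : Finset (Elem n)) : Elem n → ℝ :=
  fun i => if i ∈ S then ((B i.1 : ℝ))⁻¹ else 0

/-! ### Auxiliary lemmas -/

section Aux

variable (n B : Fin K → ℕ)

lemma prob_nonneg {x : Elem n → ℝ} (hx : InSimplex n x) (k : Fin K) :
    ∀ o : Option (Fin (n k)), 0 ≤ prob n x k o
  | some m => hx.1 ⟨k, m⟩
  | none => by simpa [prob] using hx.2 k

lemma sum_prob (x : Elem n → ℝ) (k : Fin K) :
    ∑ o : Option (Fin (n k)), prob n x k o = 1 := by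
  rw [Fintype.sum_option]
  simp [prob]

lemma jointProb_nonneg {x : Elem n → ℝ} (hx : InSimplex n x) (e : Choice n B) :
    0 ≤ jointProb n B x e :=
  Finset.prod_nonneg fun s _ => prob_nonneg n hx s.1 (e s)

lemma sum_jointProb (x : Elem n → ℝ) :
    ∑ e : Choice n B, jointProb n B x e = 1 := by
  have h := Fintype.prod_sum (fun (s : Slot B) (o : Option (Fin (n s.1))) => prob n x s.1 o)
  simp only [sum_prob, Finset.prod_const_one] at h
  rw [show (∑ e : Choice n B, jointProb n B x e)
      = ∑ e : ∀ s : Slot B, Option (Fin (n s.1)), ∏ s, prob n x s.1 (e s) from rfl, ← h]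

/-- The slope of `prob` in the coordinate `x v`. -/
def slope (v : Elem n) (j : Fin K) : Option (Fin (n j)) → ℝ
  | some m' => if (⟨j, m'⟩ : Elem n) = v then 1 else 0
  | none => if j = v.1 then -1 else 0

lemma slope_of_ne (v : Elem n) {j : Fin K} (hj : j ≠ v.1) (o : Option (Fin (n j))) :
    slope n v j o = 0 := by
  cases o with
  | some m' =>
    have : (⟨j, m'⟩ : Elem n) ≠ v := fun h => hj (by rw [← h])
    simp [slope, this]
  | none => simp [slope, hj]

lemma sum_update (x : Elem n → ℝ) (k : Fin K) (m : Fin (n k)) (t : ℝ) (j : Fin K) :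
    ∑ m' : Fin (n j), Function.update x ⟨k, m⟩ t ⟨j, m'⟩
      = (∑ m' : Fin (n j), x ⟨j, m'⟩) + if j = k then t - x ⟨k, m⟩ else 0 := by
  by_cases h : j = k
  · subst h
    rw [if_pos rfl]
    have key : ∀ m' : Fin (n j), Function.update x ⟨j, m⟩ t ⟨j, m'⟩
        = x ⟨j, m'⟩ + if m' = m then t - x ⟨j, m⟩ else 0 := by
      intro m'
      rw [Function.update_apply]
      by_cases hm : m' = m
      · subst hm; simp
      · have hne : (⟨j, m'⟩ : Elem n) ≠ ⟨j, m⟩ := by simp [hm]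
        simp [hne, hm]
    simp only [key, Finset.sum_add_distrib, Finset.sum_ite_eq' Finset.univ m,
      Finset.mem_univ, if_true]
  · rw [if_neg h, add_zero]
    refine Finset.sum_congr rfl fun m' _ => ?_
    rw [Function.update_apply, if_neg fun hh => h (congrArg Sigma.fst hh)]

lemma prob_update (x : Elem n → ℝ) (v : Elem n) (t : ℝ) (j : Fin K)
    (o : Option (Fin (n j))) :
    prob n (Function.update x v t) j o = prob n x j o + (t - x v) * slope n v j o := by
  obtain ⟨k, m⟩ := v
  cases o with
  | some m' =>
    simp only [prob, slope, Function.update_apply]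
    by_cases h : (⟨j, m'⟩ : Elem n) = ⟨k, m⟩
    · rw [if_pos h, if_pos h, mul_one]
      have : x ⟨j, m'⟩ = x ⟨k, m⟩ := by rw [h]
      rw [this]; ring
    · rw [if_neg h, if_neg h, mul_zero, add_zero]
  | none =>
    simp only [prob, slope]
    rw [sum_update]
    by_cases h : j = k
    · rw [if_pos h, if_pos (by rw [h])]
      ring
    · rw [if_neg h, if_neg h]
      ring

lemma hasDerivAt_prob (x : Elem n → ℝ) (v : Elem n) (j : Fin K)
    (o : Option (Fin (n j))) (t : ℝ) :
    HasDerivAt (fun t => prob n (Function.update x v t) j o) (slope n v j o) t := by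
  have hfun : (fun t => prob n (Function.update x v t) j o)
      = fun t => prob n x j o + (t - x v) * slope n v j o :=
    funext fun t => prob_update n x v t j o
  rw [hfun]
  simpa using (((hasDerivAt_id t).sub_const (x v)).mul_const (slope n v j o)).const_add
    (prob n x j o)

lemma hasDerivAt_jointProb (x : Elem n → ℝ) (v : Elem n) (e : Choice n B) :
    HasDerivAt (fun t => jointProb n B (Function.update x v t) e)
      (∑ s : Slot B, (∏ s' ∈ Finset.univ.erase s, prob n x s'.1 (e s'))
        * slope n v s.1 (e s)) (x v) := by
  have h := HasDerivAt.fun_finsetProd (u := (Finset.univ : Finset (Slot B)))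
    (f := fun (s : Slot B) t => prob n (Function.update x v t) s.1 (e s))
    (f' := fun s => slope n v s.1 (e s)) (x := x v)
    (fun s _ => hasDerivAt_prob n x v s.1 (e s) (x v))
  have hxx : Function.update x v (x v) = x := Function.update_eq_self v x
  simpa [jointProb, hxx, smul_eq_mul] using h

lemma hasDerivAt_ME (f : Finset (Elem n) → ℝ) (x : Elem n → ℝ) (v : Elem n) :
    HasDerivAt (fun t => ME n B f (Function.update x v t))
      (∑ e : Choice n B, f (chosen n B e Finset.univ) *
        ∑ s : Slot B, (∏ s' ∈ Finset.univ.erase s, prob n x s'.1 (e s'))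
          * slope n v s.1 (e s)) (x v) := by
  have h := HasDerivAt.fun_sum (u := (Finset.univ : Finset (Choice n B)))
    (A := fun e t => f (chosen n B e Finset.univ) * jointProb n B (Function.update x v t) e)
    (A' := fun e => f (chosen n B e Finset.univ) *
      ∑ s : Slot B, (∏ s' ∈ Finset.univ.erase s, prob n x s'.1 (e s')) * slope n v s.1 (e s))
    (x := x v)
    (fun e _ => (hasDerivAt_jointProb n B x v e).const_mul (f (chosen n B e Finset.univ)))
  simpa [ME, mul_comm] using h

lemma chosen_update_none (e : Choice n B) (s : Slot B) :
    chosen n B (Function.update e s none) Finset.univ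
      = chosen n B e (Finset.univ.erase s) := by
  unfold chosen
  conv_lhs => rw [← Finset.insert_erase (Finset.mem_univ s), Finset.biUnion_insert]
  rw [Function.update_self]
  simp only [Option.map_none, Option.toFinset_none, Finset.empty_union]
  refine Finset.biUnion_congr rfl fun s' hs' => ?_
  rw [Function.update_of_ne (Finset.ne_of_mem_erase hs')]

lemma chosen_update_some (e : Choice n B) (s : Slot B) (m : Fin (n s.1)) :
    chosen n B (Function.update e s (some m)) Finset.univ
      = insert ⟨s.1, m⟩ (chosen n B e (Finset.univ.erase s)) := by
  unfold chosen
  conv_lhs => rw [← Finset.insert_erase (Finset.mem_univ s), Finset.biUnion_insert]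
  rw [Function.update_self]
  simp only [Option.map_some, Option.toFinset_some]
  rw [← Finset.insert_eq]
  congr 1
  refine Finset.biUnion_congr rfl fun s' hs' => ?_
  rw [Function.update_of_ne (Finset.ne_of_mem_erase hs')]

lemma chosen_erase_subset (e : Choice n B) (s : Slot B) :
    chosen n B e (Finset.univ.erase s) ⊆ chosen n B e Finset.univ :=
  Finset.biUnion_subset_biUnion_of_subset_left _ (Finset.erase_subset _ _)

lemma delta_eq (f : Finset (Elem n) → ℝ) (e : Choice n B) (s : Slot B) (m : Fin (n s.1)) :
    f (chosen n B (Function.update e s (some m)) Finset.univ)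
      - f (chosen n B (Function.update e s none) Finset.univ)
      = marg n f ⟨s.1, m⟩ (chosen n B e (Finset.univ.erase s)) := by
  rw [chosen_update_some, chosen_update_none, marg]

lemma sum_option_slope (s : Slot B) (m : Fin (n s.1))
    (g : Option (Fin (n s.1)) → ℝ) (c : ℝ) :
    ∑ o : Option (Fin (n s.1)), g o * (c * slope n ⟨s.1, m⟩ s.1 o)
      = (g (some m) - g none) * c := by
  rw [Fintype.sum_option]
  have h1 : slope n (⟨s.1, m⟩ : Elem n) s.1 (none : Option (Fin (n s.1))) = -1 := by
    simp [slope]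
  have h2 : ∀ m' : Fin (n s.1), slope n (⟨s.1, m⟩ : Elem n) s.1 (some m')
      = if m' = m then 1 else 0 := by
    intro m'
    simp [slope, Sigma.mk.inj_iff]
  simp only [h1, h2, mul_ite, mul_one, mul_zero, ite_mul, zero_mul]
  rw [Finset.sum_ite_eq' Finset.univ m (fun m' => g (some m') * c)]
  simp only [Finset.mem_univ, if_true]
  ring

lemma slot_identity (x : Elem n → ℝ) (f : Finset (Elem n) → ℝ) (s : Slot B)
    (m : Fin (n s.1)) :
    ∑ e : Choice n B, f (chosen n B e Finset.univ) *
        ((∏ s' ∈ Finset.univ.erase s, prob n x s'.1 (e s')) * slope n ⟨s.1, m⟩ s.1 (e s))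
      = ∑ e : Choice n B,
          (f (chosen n B (Function.update e s (some m)) Finset.univ)
            - f (chosen n B (Function.update e s none) Finset.univ))
            * jointProb n B x e := by
  classical
  set β := fun s' : Slot B => Option (Fin (n s'.1)) with hβ
  set E := Equiv.piSplitAt s β with hE
  have hEs : ∀ p : β s × (∀ j : {j // j ≠ s}, β j.1), E.symm p s = p.1 := by
    intro p; simp [hE, Equiv.piSplitAt]
  have hEo : ∀ (p : β s × (∀ j : {j // j ≠ s}, β j.1)) (j : Slot B) (hj : j ≠ s),
      E.symm p j = p.2 ⟨j, hj⟩ := by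
    intro p j hj; simp [hE, Equiv.piSplitAt, hj]
  have hupd : ∀ (o : β s) (p : β s × (∀ j : {j // j ≠ s}, β j.1)),
      Function.update (E.symm p) s o = E.symm (o, p.2) := by
    intro o p; funext j
    rcases eq_or_ne j s with h | h
    · subst h; rw [Function.update_self, hEs]
    · rw [Function.update_of_ne h, hEo _ _ h, hEo _ _ h]
  have hP : ∀ (o : β s) (r : ∀ j : {j // j ≠ s}, β j.1),
      (∏ s' ∈ Finset.univ.erase s, prob n x s'.1 (E.symm (o, r) s'))
        = ∏ s' ∈ Finset.univ.erase s, prob n x s'.1 (E.symm ((none : β s), r) s') := by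
    intro o r
    refine Finset.prod_congr rfl fun s' hs' => ?_
    have h : s' ≠ s := Finset.ne_of_mem_erase hs'
    rw [hEo _ _ h, hEo _ _ h]
  have L : ∀ g : Choice n B → ℝ, ∑ e : Choice n B, g e
      = ∑ o : β s, ∑ r : ∀ j : {j // j ≠ s}, β j.1, g (E.symm (o, r)) := by
    intro g
    rw [← Equiv.sum_comp E.symm g, Fintype.sum_prod_type]
  rw [L, L]
  have hjp : ∀ (o : β s) (r : ∀ j : {j // j ≠ s}, β j.1),
      jointProb n B x (E.symm (o, r))
        = prob n x s.1 o * ∏ s' ∈ Finset.univ.erase s, prob n x s'.1 (E.symm ((none : β s), r) s') := by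
    intro o r
    rw [jointProb, ← Finset.mul_prod_erase Finset.univ _ (Finset.mem_univ s), hEs, hP]
  calc
    ∑ o : β s, ∑ r : ∀ j : {j // j ≠ s}, β j.1,
        f (chosen n B (E.symm (o, r)) Finset.univ) *
          ((∏ s' ∈ Finset.univ.erase s, prob n x s'.1 (E.symm (o, r) s'))
            * slope n ⟨s.1, m⟩ s.1 (E.symm (o, r) s))
      = ∑ r : ∀ j : {j // j ≠ s}, β j.1, ∑ o : β s,
          f (chosen n B (E.symm (o, r)) Finset.univ) *
          ((∏ s' ∈ Finset.univ.erase s, prob n x s'.1 (E.symm ((none : β s), r) s'))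
            * slope n ⟨s.1, m⟩ s.1 o) := by
        rw [Finset.sum_comm]
        refine Finset.sum_congr rfl fun r _ => Finset.sum_congr rfl fun o _ => ?_
        rw [hP, hEs]
    _ = ∑ r : ∀ j : {j // j ≠ s}, β j.1,
          (f (chosen n B (E.symm ((some m : β s), r)) Finset.univ)
            - f (chosen n B (E.symm ((none : β s), r)) Finset.univ)) *
          ∏ s' ∈ Finset.univ.erase s, prob n x s'.1 (E.symm ((none : β s), r) s') := by
        refine Finset.sum_congr rfl fun r _ => ?_
        exact sum_option_slope n B s m
          (fun o => f (chosen n B (E.symm (o, r)) Finset.univ)) _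
    _ = ∑ o : β s, ∑ r : ∀ j : {j // j ≠ s}, β j.1,
          (f (chosen n B (Function.update (E.symm (o, r)) s (some m)) Finset.univ)
            - f (chosen n B (Function.update (E.symm (o, r)) s none) Finset.univ))
            * jointProb n B x (E.symm (o, r)) := by
        rw [Finset.sum_comm]
        refine Finset.sum_congr rfl fun r _ => ?_
        have : ∀ o : β s,
            (f (chosen n B (Function.update (E.symm (o, r)) s (some m)) Finset.univ)
              - f (chosen n B (Function.update (E.symm (o, r)) s none) Finset.univ))
              * jointProb n B x (E.symm (o, r))
            = prob n x s.1 o *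
              ((f (chosen n B (E.symm ((some m : β s), r)) Finset.univ)
                - f (chosen n B (E.symm ((none : β s), r)) Finset.univ)) *
                ∏ s' ∈ Finset.univ.erase s, prob n x s'.1 (E.symm ((none : β s), r) s')) := by
          intro o
          rw [hupd, hupd, hjp]
          ring
        rw [Finset.sum_congr rfl fun o _ => this o, ← Finset.sum_mul, sum_prob, one_mul]

lemma pderiv_ME (f : Finset (Elem n) → ℝ) (x : Elem n → ℝ) (v : Elem n) :
    pderiv n (ME n B f) v x
      = ∑ b : Fin (B v.1), ∑ e : Choice n B,
          marg n f v (chosen n B e (Finset.univ.erase ⟨v.1, b⟩)) * jointProb n B x e := by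
  obtain ⟨k, m⟩ := v
  rw [pderiv, (hasDerivAt_ME n B f x ⟨k, m⟩).deriv]
  have step1 : ∑ e : Choice n B, f (chosen n B e Finset.univ) *
      ∑ s : Slot B, (∏ s' ∈ Finset.univ.erase s, prob n x s'.1 (e s'))
        * slope n ⟨k, m⟩ s.1 (e s)
      = ∑ s : Slot B, ∑ e : Choice n B, f (chosen n B e Finset.univ) *
        ((∏ s' ∈ Finset.univ.erase s, prob n x s'.1 (e s')) * slope n ⟨k, m⟩ s.1 (e s)) := by
    rw [Finset.sum_comm]
    exact Finset.sum_congr rfl fun e _ => Finset.mul_sum _ _ _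
  have hsig : ∀ F : Slot B → ℝ, ∑ s : Slot B, F s = ∑ j : Fin K, ∑ b : Fin (B j), F ⟨j, b⟩ := by
    intro F; rw [← Finset.univ_sigma_univ, Finset.sum_sigma]
  rw [step1, hsig]
  dsimp only
  rw [Finset.sum_eq_single_of_mem k (Finset.mem_univ k)]
  · refine Finset.sum_congr rfl fun b _ => ?_
    rw [slot_identity n B x f ⟨k, b⟩ m]
    exact Finset.sum_congr rfl fun e _ => by rw [delta_eq]
  · intro j _ hj
    refine Finset.sum_eq_zero fun b _ => Finset.sum_eq_zero fun e _ => ?_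
    rw [slope_of_ne n ⟨k, m⟩ hj, mul_zero, mul_zero]

lemma marg_nonneg (f : Finset (Elem n) → ℝ) (hmono : MonotoneSet n f)
    (v : Elem n) (A : Finset (Elem n)) : 0 ≤ marg n f v A :=
  sub_nonneg.2 (hmono _ _ (Finset.subset_insert v A))

lemma marg_bound (f : Finset (Elem n) → ℝ) (hmono : MonotoneSet n f) {α : ℝ}
    (hDR : WeaklyDR n f α) {A' A : Finset (Elem n)} (hsub : A' ⊆ A) (v : Elem n) :
    α * marg n f v A ≤ marg n f v A' := by
  by_cases hv : v ∈ A
  · have h0 : marg n f v A = 0 := by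
      rw [marg, Finset.insert_eq_self.2 hv, sub_self]
    rw [h0, mul_zero]
    exact marg_nonneg n f hmono v A'
  · exact hDR A' A hsub v hv

lemma tel (f : Finset (Elem n) → ℝ) (α : ℝ) (T : Finset (Elem n)) :
    ∀ (C : Finset (Elem n)) (g : Elem n → ℝ),
    (∀ v ∈ T, ∀ A : Finset (Elem n), C ⊆ A → α * marg n f v A ≤ g v) →
    α * (f (C ∪ T) - f C) ≤ ∑ v ∈ T, g v := by
  induction T using Finset.induction_on with
  | empty => intro C g _; simp
  | @insert a T ha ih =>
    intro C g hg
    rw [Finset.sum_insert ha]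
    have h1 : α * marg n f a (C ∪ T) ≤ g a :=
      hg a (Finset.mem_insert_self a T) (C ∪ T) Finset.subset_union_left
    have h2 : α * (f (C ∪ T) - f C) ≤ ∑ v ∈ T, g v :=
      ih C g fun v hv A hA => hg v (Finset.mem_insert_of_mem hv) A hA
    have hU : C ∪ insert a T = insert a (C ∪ T) := by rw [Finset.union_insert]
    rw [hU]
    have : α * (f (insert a (C ∪ T)) - f C)
        = α * marg n f a (C ∪ T) + α * (f (C ∪ T) - f C) := by
      rw [marg]; ring
    rw [this]
    exact add_le_add h1 h2

end Aux

theorem multinoulliExtension_dr_gap_bound {K : ℕ} (n B : Fin K → ℕ) (hn : ∀ k, 1 ≤ n k)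
    (hB : ∀ k, 0 < B k) (hBn : ∀ k, B k ≤ n k)
    (f : Finset (Elem n) → ℝ) (hf0 : ∀ S, 0 ≤ f S)
    (hmono : MonotoneSet n f)
    (α : ℝ) (hα0 : 0 < α) (hα1 : α ≤ 1) (hDR : WeaklyDR n f α)
    (S : Finset (Elem n)) (hS : Feasible n B S)
    (x : Elem n → ℝ) (hx : InSimplex n x) :
    α * (f S - ME n B f x) ≤ inner' n (indVec n B S) (grad n (ME n B f) x) := by
  classical
  have hinner : inner' n (indVec n B S) (grad n (ME n B f) x)
      = ∑ v ∈ S, (B v.1 : ℝ)⁻¹ * pderiv n (ME n B f) v x := by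
    simp only [inner', indVec, grad, ite_mul, zero_mul]
    rw [Finset.sum_ite_mem, Finset.univ_inter]
  have hswap : ∑ v ∈ S, (B v.1 : ℝ)⁻¹ * pderiv n (ME n B f) v x
      = ∑ e : Choice n B, (∑ v ∈ S, (B v.1 : ℝ)⁻¹ *
          ∑ b : Fin (B v.1), marg n f v (chosen n B e (Finset.univ.erase ⟨v.1, b⟩)))
          * jointProb n B x e := by
    calc ∑ v ∈ S, (B v.1 : ℝ)⁻¹ * pderiv n (ME n B f) v x
        = ∑ v ∈ S, ∑ e : Choice n B, ((B v.1 : ℝ)⁻¹ *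
            ∑ b : Fin (B v.1), marg n f v (chosen n B e (Finset.univ.erase ⟨v.1, b⟩)))
            * jointProb n B x e := by
          refine Finset.sum_congr rfl fun v _ => ?_
          rw [pderiv_ME, Finset.sum_comm, Finset.mul_sum]
          refine Finset.sum_congr rfl fun e _ => ?_
          rw [← Finset.sum_mul, ← mul_assoc]
      _ = _ := by
          rw [Finset.sum_comm]
          exact Finset.sum_congr rfl fun e _ => (Finset.sum_mul _ _ _).symm
  have hME : α * (f S - ME n B f x)
      = ∑ e : Choice n B, (α * (f S - f (chosen n B e Finset.univ))) * jointProb n B x e := by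
    rw [ME, eq_comm]
    calc ∑ e : Choice n B, (α * (f S - f (chosen n B e Finset.univ))) * jointProb n B x e
        = α * f S * ∑ e : Choice n B, jointProb n B x e
          - α * ∑ e : Choice n B, f (chosen n B e Finset.univ) * jointProb n B x e := by
          rw [Finset.mul_sum, Finset.mul_sum, ← Finset.sum_sub_distrib]
          exact Finset.sum_congr rfl fun e _ => by ring
      _ = α * (f S - ∑ e : Choice n B, f (chosen n B e Finset.univ) * jointProb n B x e) := by
          rw [sum_jointProb]; ring
  rw [hinner, hswap, hME]
  refine Finset.sum_le_sum fun e _ => ?_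
  refine mul_le_mul_of_nonneg_right ?_ (jointProb_nonneg n B hx e)
  set C := chosen n B e Finset.univ with hC
  have hmonoS : f S ≤ f (C ∪ S) := hmono S (C ∪ S) Finset.subset_union_right
  have h1 : α * (f S - f C) ≤ α * (f (C ∪ S) - f C) :=
    mul_le_mul_of_nonneg_left (by linarith) hα0.le
  refine h1.trans (tel n f α S C
    (fun v => (B v.1 : ℝ)⁻¹ *
      ∑ b : Fin (B v.1), marg n f v (chosen n B e (Finset.univ.erase ⟨v.1, b⟩))) ?_)
  intro v hv A hCA
  have hb : ∀ b : Fin (B v.1),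
      α * marg n f v A ≤ marg n f v (chosen n B e (Finset.univ.erase ⟨v.1, b⟩)) :=
    fun b => marg_bound n f hmono hDR ((chosen_erase_subset n B e ⟨v.1, b⟩).trans hCA) v
  have hBpos : (0 : ℝ) < (B v.1 : ℝ) := by exact_mod_cast hB v.1
  calc α * marg n f v A
      = (B v.1 : ℝ)⁻¹ * ∑ _b : Fin (B v.1), α * marg n f v A := by
        rw [Finset.sum_const, Finset.card_univ, Fintype.card_fin, nsmul_eq_mul,
          ← mul_assoc, inv_mul_cancel₀ hBpos.ne', one_mul]
    _ ≤ (B v.1 : ℝ)⁻¹ *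
          ∑ b : Fin (B v.1), marg n f v (chosen n B e (Finset.univ.erase ⟨v.1, b⟩)) :=
        mul_le_mul_of_nonneg_left (Finset.sum_le_sum fun b _ => hb b) (inv_nonneg.2 hBpos.le)

end Multinoulli
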